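/- In the vertex cover reduction with δ^p = Z·α^p and β^p > δ^p: if z ∈ {0,1}^n satisfies ‖W z + b‖_p^p ≤ δ^p, then D = {i : z_i = 0} is a vertex cover of G of size exactly q. -/
import Mathlib


/-- The output `W z + b` of the vertex-cover reduction network (see the paper). -/
def vertexCoverOut (n : ℕ) (G : SimpleGraph (Fin n)) [DecidableRel G.Adj]
    (α β : ℝ) (q : ℕ) (z : Fin n → ℝ) :
    ({e : Fin n × Fin n // e.1 < e.2} ⊕ Unit) → ℝ :=
  Sum.elim
    (fun e => if G.Adj e.val.1 e.val.2
      then 2 * α * (z e.val.1 + z e.val.2) - α else 0)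
    (fun _ => β * (∑ i, z i) - ((n - q : ℕ) : ℝ) * β)

theorem stmt_15 (n q : ℕ) (hq : q ≤ n) (G : SimpleGraph (Fin n)) [DecidableRel G.Adj]
    (p : ℕ) (hp : Even p) (hp0 : 0 < p) (α β : ℝ) (hα : 0 < α) (Z : ℕ)
    (hZ : Z = (Finset.univ.filter
      (fun e : {e : Fin n × Fin n // e.1 < e.2} => G.Adj e.val.1 e.val.2)).card)
    (hZ1 : 1 ≤ Z)
    (hβ : β ^ p > (Z : ℝ) * α ^ p)
    (z : Fin n → ℝ) (hz : ∀ i, z i = 0 ∨ z i = 1)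
    (h : (∑ r, |vertexCoverOut n G α β q z r| ^ p) ≤ (Z : ℝ) * α ^ p) :
    let D : Finset (Fin n) := Finset.univ.filter (fun i => z i = 0)
    D.card = q ∧ ∀ i j, G.Adj i j → i ∈ D ∨ j ∈ D := by
  intro D
  set S := Finset.univ.filter
      (fun e : {e : Fin n × Fin n // e.1 < e.2} => G.Adj e.val.1 e.val.2) with hS
  set g := fun e : {e : Fin n × Fin n // e.1 < e.2} =>
    |2 * α * (z e.val.1 + z e.val.2) - α| ^ p with hg
  -- split the total sum into edge part and last coordinate
  have hsplit : (∑ r, |vertexCoverOut n G α β q z r| ^ p)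
      = (∑ e ∈ S, g e) + |β * (∑ i, z i) - ((n - q : ℕ) : ℝ) * β| ^ p := by
    rw [Fintype.sum_sum_type]
    congr 1
    · rw [Finset.sum_filter]
      apply Finset.sum_congr rfl
      intro e _
      by_cases he : G.Adj e.val.1 e.val.2 <;>
        simp [vertexCoverOut, he, hp0.ne', g]
    · simp [vertexCoverOut]
  -- each adjacent edge contributes at least α^p
  have hkey : ∀ e ∈ S, α ^ p ≤ g e := by
    intro e _
    have h1 := hz e.val.1
    have h2 := hz e.val.2
    have base : α ≤ |2 * α * (z e.val.1 + z e.val.2) - α| := by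
      rcases h1 with h1 | h1 <;> rcases h2 with h2 | h2 <;> rw [h1, h2]
      · rw [show 2 * α * ((0:ℝ) + 0) - α = -α by ring, abs_neg, abs_of_pos hα]
      · rw [show 2 * α * ((0:ℝ) + 1) - α = α by ring, abs_of_pos hα]
      · rw [show 2 * α * ((1:ℝ) + 0) - α = α by ring, abs_of_pos hα]
      · rw [show 2 * α * ((1:ℝ) + 1) - α = 3 * α by ring,
          abs_of_pos (by linarith)]; linarith
    exact pow_le_pow_left₀ hα.le base p
  have hedge : (Z : ℝ) * α ^ p ≤ ∑ e ∈ S, g e := by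
    calc (Z : ℝ) * α ^ p = ∑ _e ∈ S, α ^ p := by
          rw [Finset.sum_const, hZ, nsmul_eq_mul]
      _ ≤ ∑ e ∈ S, g e := Finset.sum_le_sum hkey
  have hunit_nonneg : (0:ℝ) ≤ |β * (∑ i, z i) - ((n - q : ℕ) : ℝ) * β| ^ p :=
    pow_nonneg (abs_nonneg _) p
  have hedge_le : (∑ e ∈ S, g e) ≤ (Z : ℝ) * α ^ p := by
    rw [hsplit] at h; linarith
  have hunit0 : |β * (∑ i, z i) - ((n - q : ℕ) : ℝ) * β| ^ p = 0 := by
    rw [hsplit] at h; linarith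
  have hβ0 : β ≠ 0 := by
    intro hb
    rw [hb, zero_pow hp0.ne'] at hβ
    have : (0:ℝ) < (Z : ℝ) * α ^ p :=
      mul_pos (by exact_mod_cast hZ1) (pow_pos hα p)
    linarith
  have hsum : (∑ i, z i) = ((n - q : ℕ) : ℝ) := by
    have h0 : β * (∑ i, z i) - ((n - q : ℕ) : ℝ) * β = 0 := by
      have := pow_eq_zero_iff hp0.ne' |>.mp hunit0
      exact abs_eq_zero.mp this
    have : β * ((∑ i, z i) - ((n - q : ℕ) : ℝ)) = 0 := by ring_nf; linarith [h0]
    rcases mul_eq_zero.mp this with hb | hc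
    · exact absurd hb hβ0
    · linarith
  constructor
  · -- cardinality
    have hones : (∑ i, z i) = ((Finset.univ.filter (fun i => z i ≠ 0)).card : ℝ) := by
      rw [Finset.card_filter]
      push_cast
      apply Finset.sum_congr rfl
      intro i _
      rcases hz i with h0 | h1
      · simp [h0]
      · simp [h1]
    have hcompl : (Finset.univ.filter (fun i => z i ≠ 0)).card = n - D.card := by
      have : (Finset.univ.filter (fun i => z i ≠ 0)) = Dᶜ := by
        ext i; simp [D]
      rw [this, Finset.card_compl]
      simp
    have hDle : D.card ≤ n := by
      simpa using Finset.card_filter_le Finset.univ (fun i => z i = 0)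
    have : ((n - D.card : ℕ) : ℝ) = ((n - q : ℕ) : ℝ) := by
      rw [← hcompl, ← hones, hsum]
    have h' : n - D.card = n - q := by exact_mod_cast this
    omega
  · -- vertex cover
    intro i j hij
    by_contra hcon
    push_neg at hcon
    obtain ⟨hi, hj⟩ := hcon
    have hzi : z i = 1 := by
      rcases hz i with h0 | h1
      · exact absurd (by simp [D, h0]) hi
      · exact h1
    have hzj : z j = 1 := by
      rcases hz j with h0 | h1
      · exact absurd (by simp [D, h0]) hj
      · exact h1
    -- the sorted edge
    have hne : i ≠ j := G.ne_of_adj hij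
    have hlt : min i j < max i j := by
      rcases lt_or_gt_of_ne hne with h' | h'
      · simpa [min_eq_left h'.le, max_eq_right h'.le] using h'
      · simpa [min_eq_right h'.le, max_eq_left h'.le] using h'
    set e0 : {e : Fin n × Fin n // e.1 < e.2} := ⟨(min i j, max i j), hlt⟩ with he0
    have hadj : G.Adj e0.val.1 e0.val.2 := by
      rcases le_total i j with h' | h'
      · simpa [e0, min_eq_left h', max_eq_right h'] using hij
      · simpa [e0, min_eq_right h', max_eq_left h'] using hij.symm
    have he0S : e0 ∈ S := by simp [hS, hadj]
    have hz1 : z e0.val.1 = 1 := by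
      rcases le_total i j with h' | h' <;>
        simp [e0, min_eq_left, min_eq_right, h', hzi, hzj]
    have hz2 : z e0.val.2 = 1 := by
      rcases le_total i j with h' | h' <;>
        simp [e0, max_eq_left, max_eq_right, h', hzi, hzj]
    have hge0 : g e0 = (3 * α) ^ p := by
      rw [hg]
      simp only [hz1, hz2]
      rw [show 2 * α * (1 + 1) - α = 3 * α by ring,
        abs_of_pos (by linarith)]
    have hbig : (∑ e ∈ S, g e) ≥ (3 * α) ^ p + ((Z : ℝ) - 1) * α ^ p := by
      rw [← Finset.add_sum_erase S g he0S, hge0]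
      have hcard : (S.erase e0).card = Z - 1 := by
        rw [Finset.card_erase_of_mem he0S, hZ]
      have : ((Z : ℝ) - 1) * α ^ p ≤ ∑ e ∈ S.erase e0, g e := by
        calc ((Z : ℝ) - 1) * α ^ p = ∑ _e ∈ S.erase e0, α ^ p := by
              rw [Finset.sum_const, hcard, nsmul_eq_mul]
              have : ((Z - 1 : ℕ) : ℝ) = (Z : ℝ) - 1 := by
                have := hZ1; push_cast [this]; ring
              rw [this]
          _ ≤ _ := Finset.sum_le_sum fun e he => hkey e (Finset.mem_of_mem_erase he)
      linarith
    have h3 : (3 : ℝ) ^ p * α ^ p > 2 * α ^ p := by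
      have h3p : (3:ℝ) ^ p ≥ 3 ^ 1 := pow_le_pow_right₀ (by norm_num) hp0
      have := pow_pos hα p
      nlinarith
    rw [mul_pow] at hbig
    nlinarith [pow_pos hα p]
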